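/- Let p be a prime and let G₁, G₂ be finite groups with Sylow p-subgroups S₁, S₂. Suppose φ : S₁ → S₂ is a fusion preserving isomorphism. Then φ(S₁ ∩ [G₁,G₁]) = S₂ ∩ [G₂,G₂]. -/

import Mathlib

/-- The conjugacy setoid on homomorphisms `R →* G`: two homomorphisms are equivalent
if they differ by conjugation by an element of `G`. -/
def repSetoid (R G : Type*) [Group R] [Group G] : Setoid (R →* G) where
  r α β := ∃ g : G, ∀ x : R, β x = g * α x * g⁻¹
  iseqv := by
    constructor
    · intro α; exact ⟨1, fun x => by simp⟩
    · rintro α β ⟨g, hg⟩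
      exact ⟨g⁻¹, fun x => by rw [hg x]; group⟩
    · rintro α β γ ⟨g, hg⟩ ⟨h, hh⟩
      exact ⟨h * g, fun x => by rw [hh x, hg x]; group⟩

/-- `ConjRep R G` is the set of homomorphisms `R →* G` modulo conjugation in `G`. -/
def ConjRep (R G : Type*) [Group R] [Group G] : Type _ :=
  Quotient (repSetoid R G)

/-- The class of a homomorphism in `ConjRep R G`. -/
def ConjRep.mk {R G : Type*} [Group R] [Group G] (α : R →* G) : ConjRep R G :=
  Quotient.mk (repSetoid R G) α

/-- An isomorphism `φ : S ≃* S*` between a Sylow `p`-subgroup `S ≤ G` and a Sylow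
`p`-subgroup `S* ≤ G*` is fusion preserving if for all `P, Q ≤ S` and all homomorphisms
`α : P → Q`, `α` is induced by conjugation in `G` iff `φ ∘ α ∘ φ⁻¹` is induced by
conjugation in `G*`. -/
def IsFusionPreserving {G G' : Type*} [Group G] [Group G'] (S : Subgroup G) (S' : Subgroup G')
    (φ : S ≃* S') : Prop :=
  ∀ (P Q : Subgroup G) (hP : P ≤ S) (hQ : Q ≤ S), ∀ α : P →* Q,
    (∃ g : G, ∀ x : P, (α x : G) = g * (x : G) * g⁻¹) ↔
    (∃ g' : G', ∀ x : P,
      (φ ⟨(α x : G), hQ (α x).2⟩ : G') = g' * (φ ⟨(x : G), hP x.2⟩ : G') * g'⁻¹)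



open Subgroup MulAction

section Focal

variable {G : Type*} [Group G]

/-- Generators of the focal subgroup: `y = x⁻¹ * (g * x * g⁻¹)` with `x, g*x*g⁻¹ ∈ S`. -/
def focSet (S : Subgroup G) : Set S :=
  { y : S | ∃ (x : S) (g : G), (x : G) * (y : G) = g * (x : G) * g⁻¹ }

/-- The focal subgroup of `S` (as a subgroup of `S`). -/
def foc (S : Subgroup G) : Subgroup S :=
  Subgroup.closure (focSet S)

theorem focSet_subset_foc (S : Subgroup G) : focSet S ⊆ (foc S : Set S) :=
  Subgroup.subset_closure

theorem conj_mem_focSet {S : Subgroup G} {y : S} (hy : y ∈ focSet S) (s : S) :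
    s * y * s⁻¹ ∈ focSet S := by
  obtain ⟨x, g, hxy⟩ := hy
  refine ⟨s * x * s⁻¹, (s : G) * g * (s : G)⁻¹, ?_⟩
  push_cast
  calc (s : G) * x * (s:G)⁻¹ * ((s:G) * y * (s:G)⁻¹)
      = (s:G) * ((x:G) * y) * (s:G)⁻¹ := by group
    _ = (s:G) * (g * x * g⁻¹) * (s:G)⁻¹ := by rw [hxy]
    _ = (s:G) * g * (s:G)⁻¹ * ((s:G) * x * (s:G)⁻¹) * ((s:G) * g * (s:G)⁻¹)⁻¹ := by group

instance foc_normal (S : Subgroup G) : (foc S).Normal := by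
  constructor
  intro n hn s
  induction hn using Subgroup.closure_induction with
  | mem y hy => exact focSet_subset_foc S (conj_mem_focSet hy s)
  | one => simpa using (foc S).one_mem
  | mul a b _ _ ha hb =>
      have : s * (a * b) * s⁻¹ = (s * a * s⁻¹) * (s * b * s⁻¹) := by group
      rw [this]; exact (foc S).mul_mem ha hb
  | inv a _ ha =>
      have : s * a⁻¹ * s⁻¹ = (s * a * s⁻¹)⁻¹ := by group
      rw [this]; exact (foc S).inv_mem ha

/-- The quotient by the focal subgroup is commutative. -/
noncomputable def focCommGroup (S : Subgroup G) : CommGroup (S ⧸ foc S) :=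
  { (inferInstance : Group (S ⧸ foc S)) with
    mul_comm := by
      intro a b
      induction a using QuotientGroup.induction_on with
      | H x =>
        induction b using QuotientGroup.induction_on with
        | H y =>
          rw [← QuotientGroup.mk_mul, ← QuotientGroup.mk_mul, QuotientGroup.eq]
          refine focSet_subset_foc S ⟨y, (x : G)⁻¹, ?_⟩
          push_cast
          group }

open scoped commutatorElement in
theorem foc_le_commutator (S : Subgroup G) {y : S} (hy : y ∈ foc S) :
    (y : G) ∈ commutator G := by
  induction hy using Subgroup.closure_induction with
  | mem y hy =>
      obtain ⟨x, g, hxy⟩ := hy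
      have h1 : (y : G) = (x : G)⁻¹ * (g * (x : G) * g⁻¹) := by rw [← hxy]; group
      have h2 : (x : G)⁻¹ * (g * (x : G) * g⁻¹) = ⁅(x : G)⁻¹, g⁆ := by
        rw [commutatorElement_def]; group
      rw [h1, h2, _root_.commutator_def]
      exact Subgroup.commutator_mem_commutator (mem_top _) (mem_top _)
  | one => simpa using (commutator G).one_mem
  | mul a b _ _ ha hb => exact mul_mem ha hb
  | inv a _ ha => exact inv_mem ha

/-- Variant of `MonoidHom.transfer_eq_pow` where only the images under `ϕ` are required
to agree. -/
theorem my_transfer_eq_pow {A : Type*} [CommGroup A] {H : Subgroup G} [H.FiniteIndex]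
    (ϕ : H →* A) (g : G) (hg : g ∈ H)
    (key : ∀ (k : ℕ) (g₀ : G) (hk : g₀⁻¹ * g ^ k * g₀ ∈ H),
      ϕ ⟨g₀⁻¹ * g ^ k * g₀, hk⟩ = ϕ ⟨g ^ k, H.pow_mem hg k⟩) :
    MonoidHom.transfer ϕ g = ϕ ⟨g ^ H.index, H.pow_mem hg _⟩ := by
  classical
  letI := H.fintypeQuotientOfFiniteIndex
  rw [MonoidHom.transfer_eq_prod_quotient_orbitRel_zpowers_quot]
  have h1 : ∀ q : Quotient (orbitRel (zpowers g) (G ⧸ H)),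
      ϕ ⟨q.out.out⁻¹ * g ^ Function.minimalPeriod (g • ·) q.out * q.out.out,
        QuotientGroup.out_conj_pow_minimalPeriod_mem H g q.out⟩
        = ϕ ((⟨g, hg⟩ : H) ^ Function.minimalPeriod (g • ·) q.out) := by
    intro q
    rw [key]
    congr 1
  have hsum : ∑ q : Quotient (orbitRel (zpowers g) (G ⧸ H)),
      Function.minimalPeriod (g • ·) q.out = H.index := by
    simp_rw [minimalPeriod_eq_card]
    rw [← Fintype.card_sigma, index_eq_card, Nat.card_eq_fintype_card]
    exact (Fintype.card_congr (selfEquivSigmaOrbits (zpowers g) (G ⧸ H))).symm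
  calc ∏ q : Quotient (orbitRel (zpowers g) (G ⧸ H)), _
      = ∏ q : Quotient (orbitRel (zpowers g) (G ⧸ H)),
        ϕ ((⟨g, hg⟩ : H) ^ Function.minimalPeriod (g • ·) q.out) :=
        Finset.prod_congr rfl fun q _ => h1 q
    _ = ∏ q : Quotient (orbitRel (zpowers g) (G ⧸ H)),
        (ϕ (⟨g, hg⟩ : H)) ^ Function.minimalPeriod (g • ·) q.out := by
        simp_rw [map_pow]
    _ = (ϕ (⟨g, hg⟩ : H)) ^ ∑ q : Quotient (orbitRel (zpowers g) (G ⧸ H)),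
        Function.minimalPeriod (g • ·) q.out := Finset.prod_pow_eq_pow_sum _ _ _
    _ = ϕ ((⟨g, hg⟩ : H) ^ H.index) := by rw [hsum, map_pow]
    _ = ϕ ⟨g ^ H.index, H.pow_mem hg _⟩ := by
        congr 1

end Focal


theorem commutator_le_foc {G : Type*} [Group G] (S : Subgroup G) :
    commutator S ≤ foc S := by
  rw [_root_.commutator_def, Subgroup.commutator_le]
  intro a _ b _
  refine focSet_subset_foc _ ⟨a⁻¹, (b : G), ?_⟩
  push_cast [commutatorElement_def]
  group

section FocalThm

variable {p : ℕ} [Fact p.Prime] {G : Type*} [Group G] [Finite G]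

theorem mem_foc_of_mem_commutator (S : Sylow p G) (x : (S : Subgroup G))
    (hx : (x : G) ∈ commutator G) : x ∈ foc (S : Subgroup G) := by
  classical
  have hH : True := trivial
  set N : Subgroup (S : Subgroup G) := foc (S : Subgroup G) with hNdef
  set N' : Subgroup (Abelianization (S : Subgroup G)) := N.map Abelianization.of with hN'
  set ϕ : (S : Subgroup G) →* (Abelianization (S : Subgroup G) ⧸ N') :=
    (QuotientGroup.mk' N').comp Abelianization.of with hϕ
  have hker : ∀ a : (S : Subgroup G), ϕ a = 1 ↔ a ∈ N := by
    intro a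
    constructor
    · intro h
      have h1 : Abelianization.of a ∈ N' := (QuotientGroup.eq_one_iff _).mp h
      obtain ⟨y, hyN, hy⟩ := h1
      have h2 : y⁻¹ * a ∈ commutator (S : Subgroup G) := by
        have h3 : Abelianization.of (y⁻¹ * a) = 1 := by
          rw [map_mul, map_inv, hy]; group
        exact (QuotientGroup.eq_one_iff _).mp h3
      have h4 : y⁻¹ * a ∈ N := commutator_le_foc (S : Subgroup G) h2
      have := N.mul_mem hyN h4
      rwa [mul_inv_cancel_left] at this
    · intro h
      exact (QuotientGroup.eq_one_iff _).mpr ⟨a, h, rfl⟩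
  have key : ∀ (k : ℕ) (g₀ : G) (hk : g₀⁻¹ * (x : G) ^ k * g₀ ∈ (S : Subgroup G)),
      ϕ ⟨g₀⁻¹ * (x : G) ^ k * g₀, hk⟩ = ϕ ⟨(x : G) ^ k, (S : Subgroup G).pow_mem x.2 k⟩ := by
    intro k g₀ hk
    have hmem : (⟨(x : G) ^ k, (S : Subgroup G).pow_mem x.2 k⟩ : (S : Subgroup G))⁻¹ * ⟨g₀⁻¹ * (x : G) ^ k * g₀, hk⟩ ∈ N :=
      focSet_subset_foc _ ⟨⟨(x : G) ^ k, (S : Subgroup G).pow_mem x.2 k⟩, g₀⁻¹, by push_cast; group⟩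
    have := (hker _).mpr hmem
    rw [map_mul, map_inv, inv_mul_eq_one] at this
    exact this.symm
  have htrans := my_transfer_eq_pow ϕ (x : G) x.2 key
  have hone : MonoidHom.transfer ϕ (x : G) = 1 :=
    Abelianization.commutator_subset_ker (MonoidHom.transfer ϕ) hx
  rw [hone] at htrans
  have hpow : x ^ (S : Subgroup G).index ∈ N := (hker _).mp htrans.symm
  -- coprimality argument
  set n := (S : Subgroup G).index with hn
  have hpcop : Nat.Coprime p n := (Nat.Prime.coprime_iff_not_dvd Fact.out).mpr S.not_dvd_index
  obtain ⟨k, hk⟩ := S.isPGroup'.exists_card_eq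
  have hcopS : (Nat.card (S : Subgroup G)).Coprime n := by
    rw [hk]; exact Nat.Coprime.pow_left _ hpcop
  have hcopN : (Nat.card N).Coprime n :=
    Nat.Coprime.coprime_dvd_left (Subgroup.card_subgroup_dvd_card N) hcopS
  obtain ⟨z, hz⟩ := (Nat.Coprime.pow_left_bijective hcopN).surjective (⟨x ^ n, hpow⟩ : N)
  have hz' : (z : (S : Subgroup G)) ^ n = x ^ n := congrArg Subtype.val hz
  have hinj := (Nat.Coprime.pow_left_bijective hcopS).injective hz'
  rw [← hinj]
  exact z.2

end FocalThm

section ZPowHom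

variable {G : Type*} [Group G] [Finite G]

/-- The multiplicative map `zpowers a →* zpowers b` sending `a ^ n` to `b ^ n`,
when `a` and `b` have the same order. -/
noncomputable def zpowHom (a b : G) (h : orderOf a = orderOf b) :
    Subgroup.zpowers a →* Subgroup.zpowers b where
  toFun := zpowersEquivZPowers h
  map_one' := by
    have h0 := zpowersEquivZPowers_apply h 0
    convert h0 using 2 <;> exact Subtype.ext (by simp)
  map_mul' := by
    intro z w
    obtain ⟨n, hn⟩ := Submonoid.mem_powers_iff _ _ |>.mp
      (mem_powers_iff_mem_zpowers.mpr z.2)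
    obtain ⟨m, hm⟩ := Submonoid.mem_powers_iff _ _ |>.mp
      (mem_powers_iff_mem_zpowers.mpr w.2)
    have hz : z = ⟨a ^ n, n, zpow_natCast a n⟩ := Subtype.ext hn.symm
    have hw : w = ⟨a ^ m, m, zpow_natCast a m⟩ := Subtype.ext hm.symm
    have hzw : (⟨a ^ n, n, zpow_natCast a n⟩ * ⟨a ^ m, m, zpow_natCast a m⟩ :
        Subgroup.zpowers a) = ⟨a ^ (n + m), n + m, zpow_natCast a (n + m)⟩ :=
      Subtype.ext (pow_add a n m).symm
    rw [hz, hw, hzw]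
    show zpowersEquivZPowers h ⟨a ^ (n + m), n + m, zpow_natCast a (n + m)⟩ =
      zpowersEquivZPowers h ⟨a ^ n, n, zpow_natCast a n⟩ *
      zpowersEquivZPowers h ⟨a ^ m, m, zpow_natCast a m⟩
    rw [zpowersEquivZPowers_apply, zpowersEquivZPowers_apply, zpowersEquivZPowers_apply]
    exact Subtype.ext (pow_add b n m)

theorem zpowHom_apply (a b : G) (h : orderOf a = orderOf b) (n : ℕ) :
    zpowHom a b h ⟨a ^ n, n, zpow_natCast a n⟩ = ⟨b ^ n, n, zpow_natCast b n⟩ :=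
  zpowersEquivZPowers_apply h n

theorem zpowHom_apply_self (a b : G) (h : orderOf a = orderOf b) :
    zpowHom a b h ⟨a, Subgroup.mem_zpowers a⟩ = ⟨b, Subgroup.mem_zpowers b⟩ := by
  have h1 := zpowHom_apply a b h 1
  simpa using h1

end ZPowHom

section Fusion

variable {G₁ G₂ : Type*} [Group G₁] [Group G₂] [Finite G₁] [Finite G₂]
  (S : Subgroup G₁) (S' : Subgroup G₂) (φ : S ≃* S') (hφ : IsFusionPreserving S S' φ)

include hφ

theorem map_focSet {y : S} (hy : y ∈ focSet S) : φ y ∈ focSet S' := by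
  obtain ⟨x, g, hxy⟩ := hy
  have hcG : ((x * y : S) : G₁) = g * (x : G₁) * g⁻¹ := by push_cast; rw [hxy]
  have horder : orderOf (x : G₁) = orderOf ((x * y : S) : G₁) := by
    rw [hcG]
    exact SemiconjBy.orderOf_eq g (by unfold SemiconjBy; group)
  set c : S := x * y with hc
  let α := zpowHom (x : G₁) (c : G₁) horder
  have hP : Subgroup.zpowers (x : G₁) ≤ S := Subgroup.zpowers_le.mpr x.2
  have hQ : Subgroup.zpowers (c : G₁) ≤ S := Subgroup.zpowers_le.mpr c.2
  have hreal : ∃ gg : G₁, ∀ z : Subgroup.zpowers (x : G₁), (α z : G₁) = gg * (z : G₁) * gg⁻¹ := by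
    refine ⟨g, fun z => ?_⟩
    obtain ⟨n, hn⟩ := (Submonoid.mem_powers_iff _ _).mp (mem_powers_iff_mem_zpowers.mpr z.2)
    have hz : z = ⟨(x : G₁) ^ n, n, zpow_natCast _ n⟩ := Subtype.ext hn.symm
    rw [hz]
    show ((zpowHom (x : G₁) (c : G₁) horder) ⟨(x : G₁) ^ n, n, zpow_natCast _ n⟩ : G₁) = _
    rw [zpowHom_apply]
    show ((c : G₁)) ^ n = g * (x : G₁) ^ n * g⁻¹
    rw [hcG, conj_pow]
  obtain ⟨g', hg'⟩ := (hφ _ _ hP hQ α).mp hreal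
  have h1 := hg' ⟨(x : G₁), Subgroup.mem_zpowers _⟩
  have hα : α ⟨(x : G₁), Subgroup.mem_zpowers _⟩ = ⟨(c : G₁), Subgroup.mem_zpowers _⟩ :=
    zpowHom_apply_self _ _ horder
  simp only [hα] at h1
  refine ⟨φ x, g', ?_⟩
  have h2 : (φ x : G₂) * (φ y : G₂) = (φ c : G₂) := by rw [hc, map_mul]; push_cast; rfl
  rw [h2]
  exact h1

theorem map_focSet_symm {y : S'} (hy : y ∈ focSet S') : φ.symm y ∈ focSet S := by
  obtain ⟨x₂, g₂, hxy⟩ := hy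
  have hc2 : ((x₂ * y : S') : G₂) = g₂ * (x₂ : G₂) * g₂⁻¹ := by push_cast; rw [hxy]
  set x : S := φ.symm x₂ with hx
  set c : S := φ.symm (x₂ * y) with hc
  have hφx : φ x = x₂ := φ.apply_symm_apply _
  have hφc : φ c = x₂ * y := φ.apply_symm_apply _
  have horder : orderOf (x : G₁) = orderOf (c : G₁) := by
    calc orderOf (x : G₁) = orderOf x := Subgroup.orderOf_coe x
      _ = orderOf (φ x) := (orderOf_injective φ.toMonoidHom φ.injective x).symm
      _ = orderOf ((φ x : S') : G₂) := (Subgroup.orderOf_coe _).symm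
      _ = orderOf ((φ c : S') : G₂) := by
          rw [hφx, hφc, hc2]
          exact SemiconjBy.orderOf_eq g₂ (by unfold SemiconjBy; group)
      _ = orderOf (φ c) := Subgroup.orderOf_coe _
      _ = orderOf c := orderOf_injective φ.toMonoidHom φ.injective c
      _ = orderOf (c : G₁) := (Subgroup.orderOf_coe c).symm
  let α := zpowHom (x : G₁) (c : G₁) horder
  have hP : Subgroup.zpowers (x : G₁) ≤ S := Subgroup.zpowers_le.mpr x.2
  have hQ : Subgroup.zpowers (c : G₁) ≤ S := Subgroup.zpowers_le.mpr c.2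
  have hreal : ∃ g' : G₂, ∀ z : Subgroup.zpowers (x : G₁),
      (φ ⟨(α z : G₁), hQ (α z).2⟩ : G₂) = g' * (φ ⟨(z : G₁), hP z.2⟩ : G₂) * g'⁻¹ := by
    refine ⟨g₂, fun z => ?_⟩
    obtain ⟨n, hn⟩ := (Submonoid.mem_powers_iff _ _).mp (mem_powers_iff_mem_zpowers.mpr z.2)
    have hz : z = ⟨(x : G₁) ^ n, n, zpow_natCast _ n⟩ := Subtype.ext hn.symm
    subst hz
    have hα : α ⟨(x : G₁) ^ n, n, zpow_natCast _ n⟩ = ⟨(c : G₁) ^ n, n, zpow_natCast _ n⟩ :=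
      zpowHom_apply _ _ horder n
    rw [hα]
    have e1 : (⟨((c : G₁)) ^ n, hQ (Subgroup.pow_mem _ (Subgroup.mem_zpowers _) n)⟩ : S)
        = c ^ n := rfl
    have e2 : (⟨((x : G₁)) ^ n, hP (Subgroup.pow_mem _ (Subgroup.mem_zpowers _) n)⟩ : S)
        = x ^ n := rfl
    show (φ (c ^ n) : G₂) = g₂ * (φ (x ^ n) : G₂) * g₂⁻¹
    rw [map_pow, map_pow, hφx, hφc]
    push_cast
    rw [hxy, conj_pow]
  obtain ⟨g₁, hg₁⟩ := (hφ _ _ hP hQ α).mpr hreal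
  have h1 := hg₁ ⟨(x : G₁), Subgroup.mem_zpowers _⟩
  have hα : α ⟨(x : G₁), Subgroup.mem_zpowers _⟩ = ⟨(c : G₁), Subgroup.mem_zpowers _⟩ :=
    zpowHom_apply_self _ _ horder
  simp only [hα] at h1
  refine ⟨x, g₁, ?_⟩
  have h2 : (x : G₁) * (φ.symm y : G₁) = (c : G₁) := by
    rw [hc, map_mul]; push_cast; rfl
  rw [h2]
  exact h1

end Fusion


/-- A fusion preserving isomorphism `φ : S₁ ≃ S₂` between Sylow `p`-subgroups of finite
groups `G₁, G₂` carries `S₁ ∩ [G₁,G₁]` onto `S₂ ∩ [G₂,G₂]`. -/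
theorem stmt18 (p : ℕ) [Fact p.Prime] (G₁ G₂ : Type) [Group G₁] [Finite G₁]
    [Group G₂] [Finite G₂] (S₁ : Sylow p G₁) (S₂ : Sylow p G₂)
    (φ : (S₁ : Subgroup G₁) ≃* (S₂ : Subgroup G₂))
    (hφ : IsFusionPreserving (S₁ : Subgroup G₁) (S₂ : Subgroup G₂) φ) :
    ∀ x : (S₁ : Subgroup G₁),
      (x : G₁) ∈ commutator G₁ ↔ (φ x : G₂) ∈ commutator G₂ := by
  intro x
  have hmapfoc : ∀ y : (S₁ : Subgroup G₁),
      y ∈ foc (S₁ : Subgroup G₁) → φ y ∈ foc (S₂ : Subgroup G₂) := by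
    intro y hy
    induction hy using Subgroup.closure_induction with
    | mem z hz => exact focSet_subset_foc _ (map_focSet _ _ φ hφ hz)
    | one => rw [map_one]; exact one_mem _
    | mul a b _ _ ha hb => rw [map_mul]; exact mul_mem ha hb
    | inv a _ ha => rw [map_inv]; exact inv_mem ha
  have hmapfoc' : ∀ y : (S₂ : Subgroup G₂),
      y ∈ foc (S₂ : Subgroup G₂) → φ.symm y ∈ foc (S₁ : Subgroup G₁) := by
    intro y hy
    induction hy using Subgroup.closure_induction with
    | mem z hz => exact focSet_subset_foc _ (map_focSet_symm _ _ φ hφ hz)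
    | one => rw [map_one]; exact one_mem _
    | mul a b _ _ ha hb => rw [map_mul]; exact mul_mem ha hb
    | inv a _ ha => rw [map_inv]; exact inv_mem ha
  constructor
  · intro h
    exact foc_le_commutator _ (hmapfoc x (mem_foc_of_mem_commutator S₁ x h))
  · intro h
    have h2 := hmapfoc' (φ x) (mem_foc_of_mem_commutator S₂ (φ x) h)
    rw [φ.symm_apply_apply] at h2
    exact foc_le_commutator _ h2
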